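/- In the heterogeneous elasticity model with a a deterministic real constant and ε Gaussian with mean ε̄ and variance σ² > 0, the entire family of power-mean elasticities admits the affine representation ε_φ(x) = (1 − φ)·ε₀ + φ·ε_1(x) for every φ ∈ ℝ and every x > 0, where ε₀ = ε̄ is the geometric-mean elasticity and ε_1(x) = ε̄ + σ²·log x is the arithmetic-mean elasticity. -/

import Mathlib

open MeasureTheory Real ProbabilityTheory

lemma gauss_int' (ebar : ℝ) (v : NNReal) (hv : v ≠ 0) (g : ℝ → ℝ) :
    ∫ y, g y ∂(gaussianReal ebar v) = ∫ y, gaussianPDFReal ebar v y * g y := by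
  rw [gaussianReal_of_var_ne_zero _ hv, gaussianPDF_def]
  have hmeas : Measurable (fun x => (gaussianPDFReal ebar v x).toNNReal) :=
    (measurable_gaussianPDFReal ebar v).real_toNNReal
  simp_rw [ENNReal.ofReal]
  rw [integral_withDensity_eq_integral_smul hmeas]
  congr 1; ext y
  rw [NNReal.smul_def, smul_eq_mul, Real.coe_toNNReal _ (gaussianPDFReal_nonneg _ _ _)]

lemma gauss_integrable' (ebar : ℝ) (v : NNReal) (hv : v ≠ 0) (g : ℝ → ℝ)
    (h : Integrable (fun y => gaussianPDFReal ebar v y * g y)) :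
    Integrable g (gaussianReal ebar v) := by
  rw [gaussianReal_of_var_ne_zero _ hv, gaussianPDF_def]
  have hmeas : Measurable (fun x => (gaussianPDFReal ebar v x).toNNReal) :=
    (measurable_gaussianPDFReal ebar v).real_toNNReal
  simp_rw [ENNReal.ofReal]
  rw [integrable_withDensity_iff_integrable_smul hmeas]
  refine h.congr (Filter.Eventually.of_forall fun y => ?_)
  beta_reduce
  rw [NNReal.smul_def, smul_eq_mul, Real.coe_toNNReal _ (gaussianPDFReal_nonneg _ _ _)]

lemma gauss_shift' (ebar : ℝ) (v : NNReal) (hv : v ≠ 0) (s y : ℝ) :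
    gaussianPDFReal ebar v y * Real.exp (s * y)
      = Real.exp (s * ebar + s ^ 2 * v / 2) * gaussianPDFReal (ebar + s * v) v y := by
  have hv' : (0:ℝ) < v := by positivity
  have hexp : -(y - ebar)^2/(2*(v:ℝ)) + s*y
      = (s*ebar + s^2*(v:ℝ)/2) + (-(y-(ebar+s*(v:ℝ)))^2/(2*(v:ℝ))) := by
    field_simp; ring
  unfold gaussianPDFReal
  rw [mul_assoc, ← Real.exp_add, hexp, Real.exp_add]
  ring

lemma gauss_mgf' (ebar : ℝ) (v : NNReal) (hv : v ≠ 0) (s : ℝ) :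
    ∫ y, Real.exp (s * y) ∂(gaussianReal ebar v)
      = Real.exp (s * ebar + s ^ 2 * v / 2) := by
  rw [gauss_int' ebar v hv]
  simp_rw [gauss_shift' ebar v hv s]
  rw [integral_const_mul, integral_gaussianPDFReal_eq_one _ hv, mul_one]

lemma gauss_pdf_sub' (ebar : ℝ) (v : NNReal) (y : ℝ) :
    gaussianPDFReal ebar v y = gaussianPDFReal 0 v (y - ebar) := by
  unfold gaussianPDFReal; ring_nf

lemma gauss_id_int' (ebar : ℝ) (v : NNReal) (hv : v ≠ 0) :
    Integrable (fun y : ℝ => gaussianPDFReal ebar v y * y) := by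
  have hv' : (0:ℝ) < v := by positivity
  have hint1 : Integrable (fun y : ℝ => gaussianPDFReal 0 v (y - ebar) * (y - ebar)) := by
    have := (integrable_mul_exp_neg_mul_sq (b := 1/(2*(v:ℝ))) (by positivity)).const_mul
      ((Real.sqrt (2 * π * v))⁻¹)
    have h2 := this.comp_sub_right ebar
    convert h2 using 2 with y
    unfold gaussianPDFReal
    ring_nf
  have hint2 : Integrable (fun y : ℝ => ebar * gaussianPDFReal 0 v (y - ebar)) :=
    ((integrable_gaussianPDFReal 0 v).comp_sub_right ebar).const_mul ebar
  refine (hint1.add hint2).congr (Filter.Eventually.of_forall fun y => ?_)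
  simp only [Pi.add_apply]
  rw [gauss_pdf_sub' ebar v y]; ring

lemma gauss_mean' (ebar : ℝ) (v : NNReal) (hv : v ≠ 0) :
    ∫ y, y ∂(gaussianReal ebar v) = ebar := by
  rw [gauss_int' ebar v hv]
  have hv' : (0:ℝ) < v := by positivity
  have hshift : ∀ y : ℝ, gaussianPDFReal ebar v y * y
      = gaussianPDFReal 0 v (y - ebar) * (y - ebar) + ebar * gaussianPDFReal 0 v (y - ebar) := by
    intro y; rw [gauss_pdf_sub' ebar v y]; ring
  simp_rw [hshift]
  have hint1 : Integrable (fun y : ℝ => gaussianPDFReal 0 v (y - ebar) * (y - ebar)) := by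
    have := gauss_id_int' 0 v hv
    exact this.comp_sub_right ebar
  have hint2 : Integrable (fun y : ℝ => ebar * gaussianPDFReal 0 v (y - ebar)) :=
    ((integrable_gaussianPDFReal 0 v).comp_sub_right ebar).const_mul ebar
  rw [integral_add hint1 hint2]
  have hzero : ∫ y : ℝ, gaussianPDFReal 0 v (y - ebar) * (y - ebar) = 0 := by
    have htrans := integral_sub_right_eq_self (fun z : ℝ => gaussianPDFReal 0 v z * z) ebar
      (μ := (volume : Measure ℝ))
    rw [htrans]
    have hodd : ∀ z : ℝ, gaussianPDFReal 0 v (-z) * (-z) = -(gaussianPDFReal 0 v z * z) := by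
      intro z; unfold gaussianPDFReal; ring_nf
    have hneg := integral_neg_eq_self (fun z : ℝ => gaussianPDFReal 0 v z * z)
      (volume : Measure ℝ)
    simp_rw [hodd] at hneg
    rw [integral_neg] at hneg
    linarith
  rw [hzero, zero_add, integral_const_mul,
    integral_sub_right_eq_self (fun z : ℝ => gaussianPDFReal 0 v z) ebar,
    integral_gaussianPDFReal_eq_one _ hv, mul_one]

/-- The power mean `M_φ(x)`: `(E[Y(x)^φ])^{1/φ}` for `φ ≠ 0` and the geometric mean
`exp (E[log Y(x)])` for `φ = 0`, where `Y(x)(ω) = exp (a ω + ε ω · log x)`. -/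
noncomputable def MpowAll {Ω : Type*} [MeasurableSpace Ω] (μ : Measure Ω)
    (a e : Ω → ℝ) (φ x : ℝ) : ℝ :=
  if φ = 0 then Real.exp (∫ ω, (a ω + e ω * Real.log x) ∂μ)
  else (∫ ω, Real.exp (a ω + e ω * Real.log x) ^ φ ∂μ) ^ (1 / φ)

/-- The power-mean elasticity `ε_φ(x) = d (log M_φ(x)) / d (log x)`. -/
noncomputable def elasAll {Ω : Type*} [MeasurableSpace Ω] (μ : Measure Ω)
    (a e : Ω → ℝ) (φ x : ℝ) : ℝ :=
  deriv (fun t : ℝ => Real.log (MpowAll μ a e φ (Real.exp t))) (Real.log x)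

/-- affine representation under Gaussianity. If `a ≡ c` is a deterministic
constant and `ε ~ N(ε̄, σ²)` with `σ² = v > 0`, then for every `φ ∈ ℝ` and `x > 0`,
`ε_φ(x) = (1 − φ)·ε₀ + φ·ε_1(x)` where `ε₀ = ε̄` is the geometric-mean elasticity and
`ε_1(x) = ε̄ + v·log x` is the arithmetic-mean elasticity. -/
theorem stmt6
    {Ω : Type*} [MeasurableSpace Ω] (μ : Measure Ω) [IsProbabilityMeasure μ]
    (c : ℝ) (e : Ω → ℝ) (he : Measurable e)
    (ebar : ℝ) (v : NNReal) (hv : 0 < v)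
    (hlaw : Measure.map e μ = gaussianReal ebar v) :
    ∀ φ x : ℝ, 0 < x →
      elasAll μ (fun _ => c) e φ x
        = (1 - φ) * (elasAll μ (fun _ => c) e 0 x) + φ * (elasAll μ (fun _ => c) e 1 x)
      ∧ elasAll μ (fun _ => c) e 0 x = ebar
      ∧ elasAll μ (fun _ => c) e 1 x = ebar + (v : ℝ) * Real.log x := by
  have hv0 : v ≠ 0 := hv.ne'
  -- expectation of e
  have hemean : ∫ ω, e ω ∂μ = ebar := by
    have : ∫ y, y ∂(Measure.map e μ) = ∫ ω, e ω ∂μ :=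
      integral_map he.aemeasurable aestronglyMeasurable_id
    rw [← this, hlaw, gauss_mean' ebar v hv0]
  have heint : Integrable e μ := by
    have h1 : Integrable (fun y : ℝ => y) (gaussianReal ebar v) :=
      gauss_integrable' ebar v hv0 _ (gauss_id_int' ebar v hv0)
    rw [← hlaw] at h1
    exact (integrable_map_measure aestronglyMeasurable_id he.aemeasurable).mp h1
  have hmgf : ∀ s : ℝ, ∫ ω, Real.exp (s * e ω) ∂μ
      = Real.exp (s * ebar + s ^ 2 * (v:ℝ) / 2) := by
    intro s
    have : ∫ y, Real.exp (s * y) ∂(Measure.map e μ) = ∫ ω, Real.exp (s * e ω) ∂μ :=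
      integral_map he.aemeasurable (Continuous.aestronglyMeasurable (by continuity))
    rw [← this, hlaw, gauss_mgf' ebar v hv0]
  -- the log of the power mean, as a function of t = log x
  have hlogM : ∀ φ t : ℝ, Real.log (MpowAll μ (fun _ => c) e φ (Real.exp t))
      = c + ebar * t + φ * (v:ℝ) * t ^ 2 / 2 := by
    intro φ t
    unfold MpowAll
    rcases eq_or_ne φ 0 with hφ | hφ
    · subst hφ
      simp only [if_pos rfl, Real.log_exp, Real.log_exp]
      rw [integral_add (integrable_const c) (heint.mul_const t), integral_const,
        integral_mul_const, hemean]
      simp [measure_univ]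
    · rw [if_neg hφ]
      have hpt : ∀ ω, Real.exp (c + e ω * Real.log (Real.exp t)) ^ φ
          = Real.exp ((φ * t) * e ω) * Real.exp (φ * c) := by
        intro ω
        rw [Real.log_exp, ← Real.exp_mul, ← Real.exp_add]
        ring_nf
      simp_rw [hpt]
      rw [integral_mul_const, hmgf (φ * t), ← Real.exp_add, ← Real.exp_mul, Real.log_exp]
      field_simp
      ring
  -- the elasticity
  have helas : ∀ φ x : ℝ, elasAll μ (fun _ => c) e φ x = ebar + φ * (v:ℝ) * Real.log x := by
    intro φ x
    unfold elasAll
    have hfe : (fun t : ℝ => Real.log (MpowAll μ (fun _ => c) e φ (Real.exp t)))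
        = fun t : ℝ => c + ebar * t + φ * (v:ℝ) * t ^ 2 / 2 := funext (hlogM φ)
    rw [hfe]
    set t₀ := Real.log x
    have hd : HasDerivAt (fun t : ℝ => c + ebar * t + φ * (v:ℝ) * t ^ 2 / 2)
        (ebar + φ * (v:ℝ) * t₀) t₀ := by
      have h1 : HasDerivAt (fun t : ℝ => t) 1 t₀ := hasDerivAt_id t₀
      have h2 : HasDerivAt (fun t : ℝ => t ^ 2) (2 * t₀ ^ 1) t₀ := hasDerivAt_pow 2 t₀
      have := ((hasDerivAt_const t₀ c).add (h1.const_mul ebar)).add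
        ((h2.const_mul (φ * (v:ℝ))).div_const 2)
      exact this.congr_deriv (by ring)
    rw [hd.deriv]
  intro φ x hx
  refine ⟨?_, ?_, ?_⟩
  · rw [helas φ x, helas 0 x, helas 1 x]; ring
  · rw [helas 0 x]; ring
  · rw [helas 1 x]; ring
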